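/- The Randomized Exponential Weights Algorithm run with N experts and learning rate η = √(8 ln N / T) over T rounds has expected number of mistakes at most min_{i∈[N]} M_i + √(T log₂ N), where M_i is the number of mistakes of expert i. -/

import Mathlib

open Finset

lemma bern_hoeffding (p η : ℝ) (hp0 : 0 ≤ p) (hp1 : p ≤ 1) (hη : 0 ≤ η) :
    1 - p + p * Real.exp (-η) ≤ Real.exp (-(p * η) + η ^ 2 / 8) := by
  set D : ℝ → ℝ := fun x => 1 - p + p * Real.exp (-x) with hDdef
  have hDpos : ∀ x, 0 < D x := by
    intro x
    rcases lt_or_eq_of_le hp1 with h | h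
    · have h1 : 0 < 1 - p := by linarith
      have h2 : 0 ≤ p * Real.exp (-x) := mul_nonneg hp0 (Real.exp_pos _).le
      show 0 < 1 - p + p * Real.exp (-x); linarith
    · show 0 < 1 - p + p * Real.exp (-x); rw [h]; simpa using Real.exp_pos (-x)
  have hD' : ∀ x : ℝ, HasDerivAt D (-(p * Real.exp (-x))) x := by
    intro x
    have h1 : HasDerivAt (fun x : ℝ => Real.exp (-x)) (Real.exp (-x) * (-1)) x :=
      (hasDerivAt_neg x).exp
    have h2 := (h1.const_mul p).const_add (1 - p)
    exact h2.congr_deriv (by ring)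
  set G : ℝ → ℝ := fun x => x / 4 - p + p * Real.exp (-x) / D x with hGdef
  have hG' : ∀ x : ℝ, HasDerivAt G
      (1 / 4 + ((-(p * Real.exp (-x))) * D x - (p * Real.exp (-x)) * (-(p * Real.exp (-x)))) / (D x) ^ 2) x := by
    intro x
    have hnum : HasDerivAt (fun x : ℝ => p * Real.exp (-x)) (-(p * Real.exp (-x))) x := by
      have h1 : HasDerivAt (fun x : ℝ => Real.exp (-x)) (Real.exp (-x) * (-1)) x :=
        (hasDerivAt_neg x).exp
      have h2 := h1.const_mul p
      exact h2.congr_deriv (by ring)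
    have hdiv := hnum.div (hD' x) (hDpos x).ne'
    have hlin : HasDerivAt (fun x : ℝ => x / 4 - p) (1 / 4) x := by
      have := (hasDerivAt_id x).div_const 4
      simpa using this.sub_const p
    exact hlin.add hdiv
  have hG'nonneg : ∀ x : ℝ, 0 ≤ 1 / 4 + ((-(p * Real.exp (-x))) * D x - (p * Real.exp (-x)) * (-(p * Real.exp (-x)))) / (D x) ^ 2 := by
    intro x
    have hD := hDpos x
    have key : 1 / 4 + ((-(p * Real.exp (-x))) * D x - (p * Real.exp (-x)) * (-(p * Real.exp (-x)))) / (D x) ^ 2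
        = (D x / 2 - p * Real.exp (-x)) ^ 2 / (D x) ^ 2 := by
      field_simp
      ring
    rw [key]
    positivity
  have hGmono : Monotone G := by
    apply monotone_of_deriv_nonneg
    · intro x; exact (hG' x).differentiableAt
    · intro x; rw [(hG' x).deriv]; exact hG'nonneg x
  have hG0 : G 0 = 0 := by
    simp only [hGdef, hDdef]
    norm_num
  have hGnn : ∀ x : ℝ, 0 ≤ x → 0 ≤ G x := fun x hx => hG0 ▸ hGmono hx
  set F : ℝ → ℝ := fun x => x ^ 2 / 8 - p * x - Real.log (D x) with hFdef
  have hF' : ∀ x : ℝ, HasDerivAt F (G x) x := by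
    intro x
    have h1 : HasDerivAt (fun x : ℝ => x ^ 2 / 8) (x / 4) x := by
      have := (hasDerivAt_pow 2 x).div_const 8
      exact this.congr_deriv (by ring)
    have h2 : HasDerivAt (fun x : ℝ => p * x) p x := by
      simpa using (hasDerivAt_id x).const_mul p
    have h3 : HasDerivAt (fun x : ℝ => Real.log (D x)) ((-(p * Real.exp (-x))) / D x) x :=
      (hD' x).log (hDpos x).ne'
    have := (h1.sub h2).sub h3
    refine this.congr_deriv ?_
    simp only [hGdef]
    have : (-(p * Real.exp (-x))) / D x = -(p * Real.exp (-x) / D x) := by ring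
    rw [this]
    ring
  have hFmono : MonotoneOn F (Set.Ici 0) := by
    apply monotoneOn_of_deriv_nonneg (convex_Ici 0)
    · exact fun x _ => ((hF' x).differentiableAt.continuousAt).continuousWithinAt
    · intro x hx
      exact (hF' x).differentiableAt.differentiableWithinAt
    · intro x hx
      rw [interior_Ici] at hx
      rw [(hF' x).deriv]
      exact hGnn x (le_of_lt hx)
  have hF0 : F 0 = 0 := by
    simp only [hFdef, hDdef]
    norm_num
  have hFη : 0 ≤ F η := hF0 ▸ hFmono Set.self_mem_Ici hη hη
  have hlog : Real.log (D η) ≤ -(p * η) + η ^ 2 / 8 := by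
    simp only [hFdef] at hFη
    linarith
  have := (Real.log_le_iff_le_exp (hDpos η)).mp hlog
  simpa [hDdef] using this


/-- The Randomized Exponential Weights Algorithm with `N` experts and learning rate
`η = √(8 ln N / T)` over `T` rounds has expected number of mistakes (sampling an expert
proportionally to the exponential weights each round) at most
`min_i M_i + √(T log₂ N)`. -/
theorem stmt6 (N T : ℕ) (hN : 1 ≤ N) (hT : 1 ≤ T)
    (experts : Fin N → ℕ → Bool) (labels : ℕ → Bool)
    (loss : Fin N → ℕ → ℝ)
    (hloss : ∀ i t, loss i t = if experts i t = labels t then 0 else 1)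
    (η : ℝ) (hη : η = Real.sqrt (8 * Real.log N / T))
    (w : Fin N → ℕ → ℝ)
    (hw : ∀ i t, w i t = Real.exp (-η * ∑ s ∈ range t, loss i s)) :
    (∑ t ∈ range T, (∑ i : Fin N, w i t * loss i t) / (∑ i : Fin N, w i t)) ≤
      (univ.inf' (univ_nonempty_iff.mpr ⟨⟨0, hN⟩⟩)
          (fun i : Fin N => ∑ t ∈ range T, loss i t)) +
        Real.sqrt (T * Real.logb 2 N) := by
  have hT0 : (0:ℝ) < T := by exact_mod_cast hT
  have hl01 : ∀ i t, loss i t = 0 ∨ loss i t = 1 := by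
    intro i t; rw [hloss]; split <;> simp
  have hl0 : ∀ i t, 0 ≤ loss i t := by
    intro i t; rcases hl01 i t with h | h <;> rw [h] <;> norm_num
  have hl1 : ∀ i t, loss i t ≤ 1 := by
    intro i t; rcases hl01 i t with h | h <;> rw [h] <;> norm_num
  have hη0 : 0 ≤ η := hη ▸ Real.sqrt_nonneg _
  have hwpos : ∀ i t, 0 < w i t := fun i t => (hw i t) ▸ Real.exp_pos _
  set W : ℕ → ℝ := fun t => ∑ i : Fin N, w i t with hWdef
  have hWpos : ∀ t, 0 < W t := fun t =>
    Finset.sum_pos (fun i _ => hwpos i t) ⟨⟨0, hN⟩, Finset.mem_univ _⟩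
  set p : ℕ → ℝ := fun t => (∑ i : Fin N, w i t * loss i t) / W t with hpdef
  have hp0 : ∀ t, 0 ≤ p t := fun t =>
    div_nonneg (Finset.sum_nonneg fun i _ => mul_nonneg (hwpos i t).le (hl0 i t)) (hWpos t).le
  have hp1 : ∀ t, p t ≤ 1 := by
    intro t
    rw [hpdef]
    rw [div_le_one (hWpos t)]
    apply Finset.sum_le_sum
    intro i _
    calc w i t * loss i t ≤ w i t * 1 :=
          mul_le_mul_of_nonneg_left (hl1 i t) (hwpos i t).le
      _ = w i t := mul_one _
  -- recurrence
  have hrec : ∀ t, W (t + 1) = W t * (1 - p t + p t * Real.exp (-η)) := by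
    intro t
    have h1 : ∀ i : Fin N, w i (t + 1) = w i t * (1 - loss i t + loss i t * Real.exp (-η)) := by
      intro i
      rw [hw i (t + 1), hw i t, Finset.sum_range_succ, mul_add, Real.exp_add]
      congr 1
      rcases hl01 i t with h | h <;> rw [h] <;> simp
    have hS : p t * W t = ∑ i : Fin N, w i t * loss i t := by
      rw [hpdef]; exact div_mul_cancel₀ _ (hWpos t).ne'
    calc W (t + 1) = ∑ i : Fin N, w i t * (1 - loss i t + loss i t * Real.exp (-η)) :=
          Finset.sum_congr rfl fun i _ => h1 i
      _ = (∑ i : Fin N, w i t) - (∑ i : Fin N, w i t * loss i t)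
            + (∑ i : Fin N, w i t * loss i t) * Real.exp (-η) := by
          rw [← Finset.sum_sub_distrib, Finset.sum_mul, ← Finset.sum_add_distrib]
          apply Finset.sum_congr rfl
          intro i _; ring
      _ = W t * (1 - p t + p t * Real.exp (-η)) := by
          rw [show W t * (1 - p t + p t * Real.exp (-η))
              = W t - p t * W t + (p t * W t) * Real.exp (-η) by ring, hS]
  have hstep : ∀ t, W (t + 1) ≤ W t * Real.exp (-(p t * η) + η ^ 2 / 8) := by
    intro t
    rw [hrec t]
    exact mul_le_mul_of_nonneg_left (bern_hoeffding (p t) η (hp0 t) (hp1 t) hη0) (hWpos t).le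
  have hW0 : W 0 = N := by
    rw [hWdef]
    simp [hw]
  have hWn : ∀ n, W n ≤ (N : ℝ) * Real.exp (-(η * ∑ t ∈ range n, p t) + η ^ 2 * n / 8) := by
    intro n
    induction n with
    | zero => simp [hW0]
    | succ n ih =>
      push_cast
      calc W (n + 1) ≤ W n * Real.exp (-(p n * η) + η ^ 2 / 8) := hstep n
        _ ≤ ((N : ℝ) * Real.exp (-(η * ∑ t ∈ range n, p t) + η ^ 2 * n / 8))
              * Real.exp (-(p n * η) + η ^ 2 / 8) :=
            mul_le_mul_of_nonneg_right ih (Real.exp_pos _).le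
        _ = (N : ℝ) * Real.exp (-(η * ∑ t ∈ range (n + 1), p t) + η ^ 2 * ((n : ℝ) + 1) / 8) := by
            rw [mul_assoc, ← Real.exp_add, Finset.sum_range_succ]
            exact congrArg (fun z => (N : ℝ) * Real.exp z) (by ring)
  -- lower bound via best expert
  obtain ⟨i0, -, hi0⟩ := Finset.exists_mem_eq_inf' (univ_nonempty_iff.mpr ⟨⟨0, hN⟩⟩)
    (fun i : Fin N => ∑ t ∈ range T, loss i t)
  set L : ℝ := univ.inf' (univ_nonempty_iff.mpr ⟨⟨0, hN⟩⟩)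
    (fun i : Fin N => ∑ t ∈ range T, loss i t) with hLdef
  have hLw : Real.exp (-η * L) ≤ W T := by
    have h1 : w i0 T = Real.exp (-η * L) := by rw [hw, hi0]
    calc Real.exp (-η * L) = w i0 T := h1.symm
      _ ≤ W T := Finset.single_le_sum (fun i _ => (hwpos i T).le) (Finset.mem_univ i0)
  have hgoal : (∑ t ∈ range T, (∑ i : Fin N, w i t * loss i t) / (∑ i : Fin N, w i t))
      = ∑ t ∈ range T, p t := rfl
  rw [hgoal]
  set P : ℝ := ∑ t ∈ range T, p t with hPdef
  rcases eq_or_lt_of_le hN with h1 | h2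
  · -- N = 1
    have hN1 : N = 1 := h1.symm
    subst hN1
    have hη' : η = 0 := by
      rw [hη]; norm_num
    have hlogb : Real.logb 2 (1 : ℕ) = 0 := by norm_num
    rw [hlogb]
    simp only [Nat.cast_one, mul_zero, Real.sqrt_zero, add_zero]
    have hi0' : i0 = 0 := Subsingleton.elim _ _
    have hPL : P = L := by
      rw [hPdef, hi0, hi0']
      apply Finset.sum_congr rfl
      intro t _
      show (∑ i : Fin 1, w i t * loss i t) / (∑ i : Fin 1, w i t) = loss 0 t
      rw [Fin.sum_univ_one, Fin.sum_univ_one]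
      rw [mul_comm, mul_div_assoc, div_self (hwpos _ t).ne', mul_one]
    rw [hPL]
  · -- 2 ≤ N
    have hN1 : (1 : ℝ) < N := by exact_mod_cast h2
    have hlogN : 0 < Real.log N := Real.log_pos hN1
    have hηpos : 0 < η := by
      rw [hη]
      apply Real.sqrt_pos.mpr
      positivity
    have hη2 : η ^ 2 = 8 * Real.log N / T := by
      rw [hη, Real.sq_sqrt]
      positivity
    have hlogeq : Real.log N = η ^ 2 * T / 8 := by
      rw [hη2]; field_simp
    have hkey : Real.exp (-η * L) ≤ (N : ℝ) * Real.exp (-(η * P) + η ^ 2 * T / 8) :=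
      hLw.trans (hWn T)
    have hNpos : (0 : ℝ) < N := by linarith
    have hlogkey : -η * L ≤ Real.log N + (-(η * P) + η ^ 2 * T / 8) := by
      have h3 := Real.log_le_log (Real.exp_pos _) hkey
      rwa [Real.log_exp, Real.log_mul hNpos.ne' (Real.exp_pos _).ne', Real.log_exp] at h3
    have hP : P ≤ L + η * T / 4 := by
      rw [hlogeq] at hlogkey
      have h4 : η * P ≤ η * (L + η * T / 4) := by nlinarith
      exact le_of_mul_le_mul_left h4 hηpos
    have hfinal : η * T / 4 ≤ Real.sqrt (T * Real.logb 2 N) := by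
      have hsq : (η * T / 4) ^ 2 ≤ T * Real.logb 2 N := by
        have hlog2 : 0 < Real.log 2 := Real.log_pos one_lt_two
        have hlog2' : Real.log 2 ≤ 2 := by
          nlinarith [Real.log_two_lt_d9]
        have hTne : (T : ℝ) ≠ 0 := hT0.ne'
        have e1 : (η * T / 4) ^ 2 = T * (Real.log N / 2) := by
          have e0 : (η * T / 4) ^ 2 = η ^ 2 * T ^ 2 / 16 := by ring
          rw [e0, hη2]
          field_simp
          ring
        rw [e1, Real.logb]
        apply mul_le_mul_of_nonneg_left _ hT0.le
        rw [div_le_div_iff₀ (by norm_num) hlog2]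
        nlinarith
      calc η * T / 4 = Real.sqrt ((η * T / 4) ^ 2) := by
            rw [Real.sqrt_sq (by positivity)]
        _ ≤ Real.sqrt (T * Real.logb 2 N) := Real.sqrt_le_sqrt hsq
    linarith
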